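/- Let H ∈ 𝔥_{𝔤₂} ⊂ so(7,ℂ) be the element H = 4H_{α₁}+7H_{α₂} = 4H₁+3H₂+H₃. Then (ε₁-ε₂)(H) = 1 > 0, (ε₂-ε₃)(H) = 2 > 0, and ε₃(H) = 1 > 0; consequently the parabolic 𝔭(H) defined by the nonnegative eigenspaces of ad(H) equals the standard Borel subalgebra of so(7,ℂ), so the Borel subalgebra of so(7,ℂ) is 𝔤₂-compatible. -/

import Mathlib

open Matrix

/-- The matrix of the quadratic form `2(z₁z₄ + z₂z₅ + z₃z₆) + z₇²` on `ℂ⁷`. -/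
def so7Form : Matrix (Fin 7) (Fin 7) ℂ := Matrix.of fun i j =>
  if ((i : ℕ) < 3 ∧ (j : ℕ) = (i : ℕ) + 3) ∨ ((j : ℕ) < 3 ∧ (i : ℕ) = (j : ℕ) + 3) ∨
     ((i : ℕ) = 6 ∧ (j : ℕ) = 6) then 1 else 0

/-- `so(7,ℂ)` realized as the skew-adjoint matrices for `so7Form`. -/
def so7 : Set (Matrix (Fin 7) (Fin 7) ℂ) :=
  {M | Mᵀ * so7Form + so7Form * M = 0}

/-- The adjoint action `ad(H) : M ↦ HM - MH` on `7×7` matrices. -/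
noncomputable def adMat (H : Matrix (Fin 7) (Fin 7) ℂ) :
    Module.End ℂ (Matrix (Fin 7) (Fin 7) ℂ) :=
  LinearMap.mulLeft ℂ H - LinearMap.mulRight ℂ H

/-- The parabolic subalgebra `𝔭(H)` of `so(7,ℂ)` attached to a hyperbolic element `H`:
the part of `so(7,ℂ)` lying in the sum of the eigenspaces of `ad(H)` with nonnegative
eigenvalue. -/
noncomputable def pMat (H : Matrix (Fin 7) (Fin 7) ℂ) : Set (Matrix (Fin 7) (Fin 7) ℂ) :=
  {M | M ∈ so7 ∧
    M ∈ ⨆ c : {r : ℝ // 0 ≤ r}, Module.End.eigenspace (adMat H) ((c : ℝ) : ℂ)}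

/-- The matrix positions carrying the negative root spaces of `so(7,ℂ)` (w.r.t. the
positive system `{εᵢ ± εⱼ (i<j), εₖ}`). -/
def negPos (i j : Fin 7) : Prop :=
  ((i : ℕ) < 3 ∧ (j : ℕ) < 3 ∧ (j : ℕ) < (i : ℕ)) ∨
  (3 ≤ (i : ℕ) ∧ (i : ℕ) < 6 ∧ 3 ≤ (j : ℕ) ∧ (j : ℕ) < 6 ∧ (i : ℕ) < (j : ℕ)) ∨
  (3 ≤ (i : ℕ) ∧ (i : ℕ) < 6 ∧ (j : ℕ) < 3) ∨
  (3 ≤ (i : ℕ) ∧ (i : ℕ) < 6 ∧ (j : ℕ) = 6) ∨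
  ((i : ℕ) = 6 ∧ (j : ℕ) < 3)

/-- The standard Borel subalgebra of `so(7,ℂ)`: the Cartan plus the positive root
spaces, i.e. those elements of `so(7,ℂ)` vanishing on all negative root positions. -/
def so7Borel : Set (Matrix (Fin 7) (Fin 7) ℂ) :=
  {M | M ∈ so7 ∧ ∀ i j, negPos i j → M i j = 0}

/-- `H_{α₁} = H₁ - H₂ + 2H₃`, where `Hᵢ = Eᵢᵢ - E_{i+3,i+3}`. -/
noncomputable def HA1 : Matrix (Fin 7) (Fin 7) ℂ := Matrix.diagonal ![1, -1, 2, -1, 1, -2, 0]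

/-- `H_{α₂} = H₂ - H₃`. -/
noncomputable def HA2 : Matrix (Fin 7) (Fin 7) ℂ := Matrix.diagonal ![0, 1, -1, 0, -1, 1, 0]

lemma my_cons_val_five {α : Type*} {m : ℕ} (x : α) (u : Fin m.succ.succ.succ.succ.succ → α) :
    Matrix.vecCons x u 5 = Matrix.vecHead (Matrix.vecTail (Matrix.vecTail (Matrix.vecTail (Matrix.vecTail u)))) := rfl

lemma my_cons_val_six {α : Type*} {m : ℕ} (x : α) (u : Fin m.succ.succ.succ.succ.succ.succ → α) :
    Matrix.vecCons x u 6 = Matrix.vecHead (Matrix.vecTail (Matrix.vecTail (Matrix.vecTail (Matrix.vecTail (Matrix.vecTail u))))) := rfl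

/-- Real version of the diagonal of `H`. -/
noncomputable def drr : Fin 7 → ℝ := ![4, 3, 1, -4, -3, -1, 0]

/-- Complex version of the diagonal of `H`. -/
noncomputable def dcc : Fin 7 → ℂ := fun i => (drr i : ℂ)

lemma diag_eq_dcc :
    (Matrix.diagonal ![4, 3, 1, -4, -3, -1, 0] : Matrix (Fin 7) (Fin 7) ℂ)
      = Matrix.diagonal dcc := by
  have hv : (![4, 3, 1, -4, -3, -1, 0] : Fin 7 → ℂ) = dcc := by
    funext i; fin_cases i <;> simp [dcc, drr, my_cons_val_five, my_cons_val_six] <;> norm_num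
  rw [hv]

lemma adMat_diag_apply (M : Matrix (Fin 7) (Fin 7) ℂ) (i j : Fin 7) :
    adMat (Matrix.diagonal dcc) M i j = (dcc i - dcc j) * M i j := by
  simp only [adMat, LinearMap.sub_apply, LinearMap.mulLeft_apply, LinearMap.mulRight_apply,
    Matrix.sub_apply, Matrix.diagonal_mul, Matrix.mul_diagonal]
  ring

lemma negPos_drr {i j : Fin 7} (h : negPos i j) : drr i - drr j < 0 := by
  fin_cases i <;> fin_cases j <;>
    simp_all [negPos, drr, my_cons_val_five, my_cons_val_six] <;> norm_num

lemma not_negPos_drr {i j : Fin 7} (h : ¬ negPos i j) : 0 ≤ drr i - drr j := by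
  fin_cases i <;> fin_cases j <;>
    simp_all [negPos, drr, my_cons_val_five, my_cons_val_six] <;> norm_num

/-- The submodule of matrices vanishing on all negative root positions. -/
noncomputable def negVanish : Submodule ℂ (Matrix (Fin 7) (Fin 7) ℂ) where
  carrier := {M | ∀ i j, negPos i j → M i j = 0}
  add_mem' := by
    intro a b ha hb i j hij
    simp [Matrix.add_apply, ha i j hij, hb i j hij]
  zero_mem' := by intro i j _; simp
  smul_mem' := by
    intro c a ha i j hij
    simp [Matrix.smul_apply, ha i j hij]

lemma stdBasisMatrix_mem_eigenspace (i j : Fin 7) (x : ℂ) :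
    Matrix.single i j x ∈
      Module.End.eigenspace (adMat (Matrix.diagonal dcc)) (dcc i - dcc j) := by
  rw [Module.End.mem_eigenspace_iff]
  ext a b
  rw [adMat_diag_apply, Matrix.smul_apply, smul_eq_mul]
  by_cases h : i = a ∧ j = b
  · obtain ⟨rfl, rfl⟩ := h; rfl
  · rw [Matrix.single, Matrix.of_apply, if_neg h, mul_zero, mul_zero]

lemma sup_eigen_eq :
    {M : Matrix (Fin 7) (Fin 7) ℂ |
      M ∈ ⨆ c : {r : ℝ // 0 ≤ r},
        Module.End.eigenspace (adMat (Matrix.diagonal dcc)) ((c : ℝ) : ℂ)}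
      = {M | ∀ i j, negPos i j → M i j = 0} := by
  ext M
  simp only [Set.mem_setOf_eq]
  constructor
  · intro hM
    have hle : (⨆ c : {r : ℝ // 0 ≤ r},
        Module.End.eigenspace (adMat (Matrix.diagonal dcc)) ((c : ℝ) : ℂ)) ≤ negVanish := by
      refine iSup_le fun c => ?_
      intro N hN i j hij
      rw [Module.End.mem_eigenspace_iff] at hN
      have h1 : (dcc i - dcc j) * N i j = ((c : ℝ) : ℂ) * N i j := by
        have := congrArg (fun P => P i j) hN
        simpa [adMat_diag_apply, Matrix.smul_apply, smul_eq_mul] using this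
      by_contra hne
      have h2 : dcc i - dcc j = ((c : ℝ) : ℂ) := mul_right_cancel₀ hne h1
      have h3 : drr i - drr j = (c : ℝ) := by
        have : ((drr i - drr j : ℝ) : ℂ) = ((c : ℝ) : ℂ) := by push_cast [dcc] at h2 ⊢; exact h2
        exact_mod_cast this
      have := negPos_drr hij
      have := c.2
      linarith
    exact hle hM
  · intro hM
    rw [Matrix.matrix_eq_sum_single (α := ℂ) M]
    refine Submodule.sum_mem _ fun i _ => Submodule.sum_mem _ fun j _ => ?_
    by_cases hij : negPos i j
    · rw [hM i j hij]
      simpa using Submodule.zero_mem _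
    · have h0 : 0 ≤ drr i - drr j := not_negPos_drr hij
      have hcast : dcc i - dcc j = (((⟨drr i - drr j, h0⟩ : {r : ℝ // 0 ≤ r}) : ℝ) : ℂ) := by
        push_cast [dcc]; ring
      refine le_iSup (fun c : {r : ℝ // 0 ≤ r} =>
        Module.End.eigenspace (adMat (Matrix.diagonal dcc)) ((c : ℝ) : ℂ))
        ⟨drr i - drr j, h0⟩ ?_
      have := stdBasisMatrix_mem_eigenspace i j (M i j)
      rwa [hcast] at this

/-- For `H = 4H_{α₁} + 7H_{α₂} = 4H₁ + 3H₂ + H₃ ∈ 𝔥_{𝔤₂}` one has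
`(ε₁-ε₂)(H) = 1 > 0`, `(ε₂-ε₃)(H) = 2 > 0`, `ε₃(H) = 1 > 0`, and the parabolic `𝔭(H)`
determined by the nonnegative eigenspaces of `ad(H)` is exactly the standard Borel
subalgebra of `so(7,ℂ)`; hence the Borel subalgebra of `so(7,ℂ)` is `𝔤₂`-compatible. -/
theorem stmt6 (H : Matrix (Fin 7) (Fin 7) ℂ)
    (hH : H = 4 • HA1 + 7 • HA2) :
    H = Matrix.diagonal ![4, 3, 1, -4, -3, -1, 0] ∧
    H 0 0 - H 1 1 = 1 ∧ (0 : ℝ) < 1 ∧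
    H 1 1 - H 2 2 = 2 ∧ (0 : ℝ) < 2 ∧
    H 2 2 = 1 ∧
    pMat H = so7Borel := by
  have hHd : H = Matrix.diagonal ![4, 3, 1, -4, -3, -1, 0] := by
    subst hH
    ext i j
    fin_cases i <;> fin_cases j <;>
      simp [HA1, HA2, Matrix.diagonal, Matrix.add_apply, Matrix.smul_apply, my_cons_val_five, my_cons_val_six] <;> norm_num
  refine ⟨hHd, ?_, by norm_num, ?_, by norm_num, ?_, ?_⟩
  · rw [hHd]; norm_num [Matrix.diagonal, my_cons_val_five, my_cons_val_six]
  · rw [hHd]; norm_num [Matrix.diagonal, my_cons_val_five, my_cons_val_six, Matrix.cons_val_two]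
  · rw [hHd]; norm_num [Matrix.diagonal, my_cons_val_five, my_cons_val_six, Matrix.cons_val_two]
  · rw [hHd, diag_eq_dcc]
    ext M
    simp only [pMat, so7Borel, Set.mem_setOf_eq]
    constructor
    · rintro ⟨h1, h2⟩
      exact ⟨h1, Set.ext_iff.mp sup_eigen_eq M |>.mp h2⟩
    · rintro ⟨h1, h2⟩
      exact ⟨h1, Set.ext_iff.mp sup_eigen_eq M |>.mpr h2⟩
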